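/- arXiv:0707.4136 — 2 statements merged into one kernel-verified Lean document; each statement's English description precedes it below -/
import Mathlib

section
/- Every element of the special unitary group SU(2) can be written in Euler-angle form: for every U in SU(2) there exist real numbers φ ∈ [0, 2π], θ ∈ [0, π] and ψ ∈ [0, 2π] such that U = k_φ · a_θ · k_ψ. -/
open Matrix Real

/-- The matrix `k_t = diag(e^{it}, e^{-it})`. -/
noncomputable def eulerK (t : ℝ) : Matrix (Fin 2) (Fin 2) ℂ :=
  !![Complex.exp (Complex.I * t), 0; 0, Complex.exp (-(Complex.I * t))]

/-- The matrix `a_θ` with rows `(cos(θ/2), i sin(θ/2))` and `(i sin(θ/2), cos(θ/2))`. -/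
noncomputable def eulerA (θ : ℝ) : Matrix (Fin 2) (Fin 2) ℂ :=
  !![(Real.cos (θ / 2) : ℂ), Complex.I * (Real.sin (θ / 2) : ℂ);
     Complex.I * (Real.sin (θ / 2) : ℂ), (Real.cos (θ / 2) : ℂ)]

lemma exp_shift (t : ℝ) : Complex.exp (Complex.I * ((t + 2 * π) : ℝ)) =
    Complex.exp (Complex.I * t) := by
  push_cast
  rw [mul_add, Complex.exp_add]
  have h : Complex.I * (2 * (π : ℂ)) = 2 * π * Complex.I := by ring
  rw [h, Complex.exp_two_pi_mul_I, mul_one]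

/-- Every element of SU(2) admits an Euler-angle decomposition
`U = k_φ · a_θ · k_ψ` with `φ ∈ [0, 2π]`, `θ ∈ [0, π]`, `ψ ∈ [0, 2π]`. -/
theorem SU2_euler_angle_surjective
    (U : Matrix.specialUnitaryGroup (Fin 2) ℂ) :
    ∃ φ θ ψ : ℝ, φ ∈ Set.Icc 0 (2 * π) ∧ θ ∈ Set.Icc 0 π ∧ ψ ∈ Set.Icc 0 (2 * π) ∧
      (U : Matrix (Fin 2) (Fin 2) ℂ) = eulerK φ * eulerA θ * eulerK ψ := by
  obtain ⟨hu, hdet⟩ := Matrix.mem_specialUnitaryGroup_iff.mp U.2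
  set A : Matrix (Fin 2) (Fin 2) ℂ := (U : Matrix (Fin 2) (Fin 2) ℂ) with hA
  have hsu : star A * A = 1 := Matrix.mem_unitaryGroup_iff'.mp hu
  have hadj : A * A.adjugate = 1 := by
    rw [Matrix.mul_adjugate, hdet, one_smul]
  have hstar : star A = A.adjugate := by
    calc star A = star A * (A * A.adjugate) := by rw [hadj, mul_one]
    _ = (star A * A) * A.adjugate := by rw [mul_assoc]
    _ = A.adjugate := by rw [hsu, one_mul]
  set a : ℂ := A 0 0 with ha
  set b : ℂ := A 0 1 with hb
  have hadj2 : A.adjugate = !![A 1 1, -(A 0 1); -(A 1 0), A 0 0] := Matrix.adjugate_fin_two A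
  have h11 : A 1 1 = starRingEnd ℂ a := by
    have h := congrFun (congrFun hstar 0) 0
    rw [hadj2] at h
    simp only [Matrix.star_apply, Matrix.cons_val_zero, Matrix.cons_val_one, Matrix.head_cons,
      Matrix.cons_val', Matrix.empty_val', Matrix.cons_val_fin_one] at h
    exact h.symm
  have h10 : A 1 0 = -(starRingEnd ℂ b) := by
    have h := congrFun (congrFun hstar 0) 1
    rw [hadj2] at h
    simp only [Matrix.star_apply, Matrix.cons_val_zero, Matrix.cons_val_one, Matrix.head_cons,
      Matrix.cons_val', Matrix.empty_val', Matrix.cons_val_fin_one, RCLike.star_def] at h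
    rw [← Complex.conj_conj (A 1 0), h]
    simp
    rfl
  have hdet2 : a * starRingEnd ℂ a + b * starRingEnd ℂ b = 1 := by
    have h := hdet
    rw [Matrix.det_fin_two] at h
    rw [h11, h10] at h
    linear_combination h
  have habs : ‖a‖ ^ 2 + ‖b‖ ^ 2 = 1 := by
    have h := congrArg Complex.re hdet2
    simp only [Complex.mul_conj, Complex.add_re, Complex.ofReal_re, Complex.one_re] at h
    rw [Complex.sq_norm, Complex.sq_norm]
    exact h
  have hb1 : ‖b‖ ≤ 1 := by
    nlinarith [norm_nonneg a, norm_nonneg b]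
  set α : ℝ := a.arg with hα
  set β : ℝ := b.arg with hβ
  set θ : ℝ := 2 * Real.arcsin (‖b‖) with hθ
  set φ0 : ℝ := (α + β - π / 2) / 2 with hφ0
  set ψ0 : ℝ := (α - β + π / 2) / 2 with hψ0
  obtain ⟨hα1, hα2⟩ := Complex.arg_mem_Ioc a
  obtain ⟨hβ1, hβ2⟩ := Complex.arg_mem_Ioc b
  have hpi : (0:ℝ) < π := Real.pi_pos
  set φ : ℝ := if φ0 < 0 then φ0 + 2 * π else φ0 with hφ
  set ψ : ℝ := if ψ0 < 0 then ψ0 + 2 * π else ψ0 with hψ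
  have hexpφ : Complex.exp (Complex.I * φ) = Complex.exp (Complex.I * φ0) := by
    rw [hφ]; split_ifs with h
    · exact exp_shift φ0
    · rfl
  have hexpψ : Complex.exp (Complex.I * ψ) = Complex.exp (Complex.I * ψ0) := by
    rw [hψ]; split_ifs with h
    · exact exp_shift ψ0
    · rfl
  have harc : (2 : ℝ) * Real.arcsin (‖b‖) / 2 = Real.arcsin (‖b‖) := by ring
  have hcos : Real.cos (θ / 2) = ‖a‖ := by
    rw [hθ, harc, Real.cos_arcsin,
      show (1 : ℝ) - ‖b‖ ^ 2 = ‖a‖ ^ 2 by linarith]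
    exact Real.sqrt_sq (norm_nonneg a)
  have hsin : Real.sin (θ / 2) = ‖b‖ := by
    rw [hθ, harc, Real.sin_arcsin (by linarith [norm_nonneg b]) hb1]
  refine ⟨φ, θ, ψ, ?_, ?_, ?_, ?_⟩
  · constructor
    · rw [hφ]; split_ifs with h
      · have : -(5 * π / 4) ≤ φ0 := by rw [hφ0]; linarith
        linarith
      · linarith
    · rw [hφ]; split_ifs with h
      · linarith
      · have : φ0 ≤ 3 * π / 4 := by rw [hφ0]; linarith
        linarith
  · constructor
    · rw [hθ]
      have := Real.arcsin_nonneg.mpr (norm_nonneg b)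
      linarith
    · rw [hθ]
      have := Real.arcsin_le_pi_div_two (‖b‖)
      linarith
  · constructor
    · rw [hψ]; split_ifs with h
      · have : -(3 * π / 4) ≤ ψ0 := by rw [hψ0]; linarith
        linarith
      · linarith
    · rw [hψ]; split_ifs with h
      · linarith
      · have : ψ0 ≤ 5 * π / 4 := by rw [hψ0]; linarith
        linarith
  · set E : ℂ := Complex.exp (Complex.I * φ0) with hE
    set F : ℂ := Complex.exp (Complex.I * ψ0) with hF
    have hEne : E ≠ 0 := Complex.exp_ne_zero _
    have hFne : F ≠ 0 := Complex.exp_ne_zero _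
    set G : ℂ := Complex.exp (Complex.I * α) with hG
    set H : ℂ := Complex.exp (Complex.I * β) with hHdef
    have hGne : G ≠ 0 := Complex.exp_ne_zero _
    have hHne : H ≠ 0 := Complex.exp_ne_zero _
    have key00 : (‖a‖ : ℂ) * G = a := by
      rw [hG, mul_comm Complex.I (α:ℂ)]; exact Complex.norm_mul_exp_arg_mul_I a
    have key01 : (‖b‖ : ℂ) * H = b := by
      rw [hHdef, mul_comm Complex.I (β:ℂ)]; exact Complex.norm_mul_exp_arg_mul_I b
    have hsum : E * F = G := by
      rw [hE, hF, hG, ← Complex.exp_add]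
      congr 1
      rw [hφ0, hψ0]; push_cast; ring
    have hdiff : Complex.I * E = H * F := by
      have h2 : Complex.exp (Complex.I * ((π/2 : ℝ):ℂ)) = Complex.I := by
        push_cast
        rw [mul_comm, Complex.exp_mul_I, Complex.cos_pi_div_two, Complex.sin_pi_div_two]
        ring
      have : Complex.I * E = Complex.exp (Complex.I * ((π/2 : ℝ):ℂ)) * E := by rw [h2]
      rw [this, hE, hF, hHdef, ← Complex.exp_add, ← Complex.exp_add]
      congr 1
      rw [hφ0, hψ0]; push_cast; ring
    have hconja : starRingEnd ℂ a = (‖a‖ : ℂ) * G⁻¹ := by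
      conv_lhs => rw [← key00]
      rw [_root_.map_mul, Complex.conj_ofReal]
      congr 1
      rw [hG, ← Complex.exp_conj, ← Complex.exp_neg]
      congr 1
      simp
    have hconjb : starRingEnd ℂ b = (‖b‖ : ℂ) * H⁻¹ := by
      conv_lhs => rw [← key01]
      rw [_root_.map_mul, Complex.conj_ofReal]
      congr 1
      rw [hHdef, ← Complex.exp_conj, ← Complex.exp_neg]
      congr 1
      simp
    have hexpφ' : Complex.exp (-(Complex.I * (φ:ℝ))) = E⁻¹ := by
      rw [Complex.exp_neg, hexpφ]
    have hexpψ' : Complex.exp (-(Complex.I * (ψ:ℝ))) = F⁻¹ := by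
      rw [Complex.exp_neg, hexpψ]
    ext i j
    fin_cases i <;> fin_cases j <;>
      simp only [eulerK, eulerA, Matrix.mul_apply, Fin.sum_univ_two, Matrix.cons_val_zero,
        Matrix.cons_val_one, Matrix.head_cons, Matrix.head_fin_const, Matrix.cons_val',
        Matrix.empty_val', Matrix.cons_val_fin_one, Matrix.of_apply, hexpφ, hexpψ, hexpφ', hexpψ',
        mul_zero, zero_mul, add_zero, zero_add]
    · show a = _
      push_cast [hcos, hsin]
      field_simp
      linear_combination (-1 : ℂ) * key00 - (‖a‖ : ℂ) * hsum
    · show b = _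
      push_cast [hcos, hsin]
      field_simp
      linear_combination -(‖b‖ : ℂ) * hdiff - F * key01
    · show A 1 0 = _
      rw [h10, hconjb]
      push_cast [hcos, hsin]
      field_simp
      linear_combination Complex.I * (‖b‖ : ℂ) * hdiff -
        (‖b‖ : ℂ) * E * Complex.I_mul_I
    · show A 1 1 = _
      rw [h11, hconja]
      push_cast [hcos, hsin]
      field_simp
      linear_combination (‖a‖ : ℂ) * hsum
end

section
/- The Euler-angle parametrization of SU(2) is two-to-one on the open box: for (φ,θ,ψ) and (φ',θ',ψ') both in (0,2π) × (0,π) × (0,2π), one has k_{φ'} · a_{θ'} · k_{ψ'} = k_φ · a_θ · k_ψ if and only if θ' = θ and either (φ' = φ and ψ' = ψ), or (φ' ≡ φ + π (mod 2π) and ψ' ≡ ψ + π (mod 2π)). In particular, k_{φ+π} · a_θ · k_{ψ+π} = k_φ · a_θ · k_ψ for all real φ, θ, ψ. -/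
open Matrix Real

lemma eulerK_shift (t : ℝ) (m : ℤ) : eulerK (t + π + 2*π*m) = -eulerK t := by
  have h : Complex.exp (Complex.I * ((t : ℂ) + π + 2*π*m)) = -Complex.exp (Complex.I * t) := by
    rw [show Complex.I * ((t:ℂ) + π + 2*π*m) = Complex.I*t + π*Complex.I + m*(2*π*Complex.I) by ring]
    rw [Complex.exp_add, Complex.exp_add, Complex.exp_pi_mul_I, Complex.exp_int_mul_two_pi_mul_I]
    ring
  have h2 : Complex.exp (-(Complex.I * ((t : ℂ) + π + 2*π*m))) = -Complex.exp (-(Complex.I * t)) := by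
    rw [Complex.exp_neg, Complex.exp_neg, h, inv_neg]
  unfold eulerK
  ext i j
  fin_cases i <;> fin_cases j <;> push_cast <;> simp [h, h2]

lemma euler_prod (φ θ ψ : ℝ) : eulerK φ * eulerA θ * eulerK ψ =
    !![Complex.exp (Complex.I*((φ:ℂ)+ψ)) * Real.cos (θ/2),
       Complex.I * Complex.exp (Complex.I*((φ:ℂ)-ψ)) * Real.sin (θ/2);
       Complex.I * Complex.exp (-(Complex.I*((φ:ℂ)-ψ))) * Real.sin (θ/2),
       Complex.exp (-(Complex.I*((φ:ℂ)+ψ))) * Real.cos (θ/2)] := by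
  unfold eulerK eulerA
  have e1 : Complex.exp (Complex.I*((φ:ℂ)+ψ)) = Complex.exp (Complex.I*φ) * Complex.exp (Complex.I*ψ) := by
    rw [← Complex.exp_add]; ring_nf
  have e2 : Complex.exp (Complex.I*((φ:ℂ)-ψ)) = Complex.exp (Complex.I*φ) * Complex.exp (-(Complex.I*ψ)) := by
    rw [← Complex.exp_add]; ring_nf
  have e3 : Complex.exp (-(Complex.I*((φ:ℂ)-ψ))) = Complex.exp (-(Complex.I*φ)) * Complex.exp (Complex.I*ψ) := by
    rw [← Complex.exp_add]; ring_nf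
  have e4 : Complex.exp (-(Complex.I*((φ:ℂ)+ψ))) = Complex.exp (-(Complex.I*φ)) * Complex.exp (-(Complex.I*ψ)) := by
    rw [← Complex.exp_add]; ring_nf
  ext i j
  fin_cases i <;> fin_cases j <;>
      simp [Matrix.mul_apply, Fin.sum_univ_two] <;>
    first
      | (rw [e1]; ring) | (rw [e2]; ring) | (rw [e3]; ring) | (rw [e4]; ring)


set_option maxHeartbeats 2000000 in
/-- The Euler-angle parametrization of SU(2) is two-to-one on the open box
`(0,2π) × (0,π) × (0,2π)`: two parameter triples give the same matrix iff the
`θ`'s agree and either the `φ`'s and `ψ`'s agree, or they differ by `π` mod `2π`.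
In particular `k_{φ+π} a_θ k_{ψ+π} = k_φ a_θ k_ψ` for all real `φ, θ, ψ`. -/
theorem SU2_euler_angle_two_to_one :
    (∀ φ θ ψ φ' θ' ψ' : ℝ,
      φ ∈ Set.Ioo 0 (2 * π) → θ ∈ Set.Ioo 0 π → ψ ∈ Set.Ioo 0 (2 * π) →
      φ' ∈ Set.Ioo 0 (2 * π) → θ' ∈ Set.Ioo 0 π → ψ' ∈ Set.Ioo 0 (2 * π) →
      (eulerK φ' * eulerA θ' * eulerK ψ' = eulerK φ * eulerA θ * eulerK ψ ↔
        θ' = θ ∧ ((φ' = φ ∧ ψ' = ψ) ∨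
          ((∃ m : ℤ, φ' = φ + π + 2 * π * m) ∧ (∃ n : ℤ, ψ' = ψ + π + 2 * π * n))))) ∧
    (∀ φ θ ψ : ℝ,
      eulerK (φ + π) * eulerA θ * eulerK (ψ + π) = eulerK φ * eulerA θ * eulerK ψ) := by
  have pi_pos := Real.pi_pos
  constructor
  · intro φ θ ψ φ' θ' ψ' hφ hθ hψ hφ' hθ' hψ'
    constructor
    · intro heq
      rw [euler_prod, euler_prod] at heq
      have h00 := congrFun (congrFun heq 0) 0
      have h01 := congrFun (congrFun heq 0) 1
      simp only [Matrix.cons_val', Matrix.cons_val_zero, Matrix.cons_val_one, Matrix.head_cons,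
        Matrix.empty_val', Matrix.cons_val_fin_one, Matrix.head_fin_const, Matrix.of_apply] at h00 h01
      -- cosines are positive
      have hc' : 0 < Real.cos (θ'/2) :=
        Real.cos_pos_of_mem_Ioo ⟨by linarith [hθ'.1], by linarith [hθ'.2]⟩
      have hc : 0 < Real.cos (θ/2) :=
        Real.cos_pos_of_mem_Ioo ⟨by linarith [hθ.1], by linarith [hθ.2]⟩
      have hs : 0 < Real.sin (θ/2) :=
        Real.sin_pos_of_pos_of_lt_pi (by linarith [hθ.1]) (by linarith [hθ.2])
      -- θ' = θ
      have habs := congrArg (fun z : ℂ => ‖z‖) h00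
      simp only [norm_mul, Complex.norm_exp, Complex.norm_real, Real.norm_eq_abs] at habs
      have hre1 : (Complex.I*((φ':ℂ)+ψ')).re = 0 := by simp
      have hre2 : (Complex.I*((φ:ℂ)+ψ)).re = 0 := by simp
      rw [hre1, hre2, Real.exp_zero, one_mul, one_mul, abs_of_pos hc', abs_of_pos hc] at habs
      have hθeq : θ' = θ := by
        have := Real.injOn_cos ⟨by linarith [hθ'.1], by linarith [hθ'.2]⟩
          ⟨by linarith [hθ.1], by linarith [hθ.2]⟩ habs
        linarith
      rw [hθeq] at h00 h01
      refine ⟨hθeq, ?_⟩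
      -- cancel to get exponential equalities
      have hcne : ((Real.cos (θ/2) : ℂ)) ≠ 0 := by exact_mod_cast hc.ne'
      have hsne : ((Real.sin (θ/2) : ℂ)) ≠ 0 := by exact_mod_cast hs.ne'
      have E1 := mul_right_cancel₀ hcne h00
      have E2 := mul_left_cancel₀ Complex.I_ne_zero (mul_right_cancel₀ hsne h01)
      rw [Complex.exp_eq_exp_iff_exists_int] at E1 E2
      obtain ⟨a, ha⟩ := E1
      obtain ⟨b, hb⟩ := E2
      have ha' : φ' + ψ' = φ + ψ + 2*π*a := by
        rw [show Complex.I*((φ:ℂ)+ψ) + a*(2*π*Complex.I) = Complex.I * ((φ:ℂ)+ψ+2*π*a) by ring] at ha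
        have := mul_left_cancel₀ Complex.I_ne_zero ha
        exact_mod_cast this
      have hb' : φ' - ψ' = φ - ψ + 2*π*b := by
        rw [show Complex.I*((φ:ℂ)-ψ) + b*(2*π*Complex.I) = Complex.I * ((φ:ℂ)-ψ+2*π*b) by ring] at hb
        have := mul_left_cancel₀ Complex.I_ne_zero hb
        exact_mod_cast this
      rcases Int.even_or_odd (a+b) with ⟨m, hm⟩ | ⟨m, hm⟩
      · -- even case : φ' = φ, ψ' = ψ
        left
        have hmr : ((a:ℝ)+(b:ℝ)) = (m:ℝ)+(m:ℝ) := by exact_mod_cast hm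
        have hπ : π*((a:ℝ)+(b:ℝ)) = π*((m:ℝ)+(m:ℝ)) := by rw [hmr]
        have hφeq : φ' - φ = 2*π*(m:ℝ) := by nlinarith [ha', hb', hπ]
        have hψeq : ψ' - ψ = 2*π*(m:ℝ) - 2*π*(b:ℝ) := by nlinarith [ha', hb', hπ]
        have hm0 : m = 0 := by
          have h1 : (m:ℝ) < 1 := by nlinarith [hφ.1, hφ.2, hφ'.1, hφ'.2]
          have h2 : (-1:ℝ) < (m:ℝ) := by nlinarith [hφ.1, hφ.2, hφ'.1, hφ'.2]
          have h1' : m < 1 := by exact_mod_cast h1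
          have h2' : -1 < m := by exact_mod_cast h2
          omega
        subst hm0
        simp only [Int.cast_zero, mul_zero] at hφeq hψeq
        have hb0 : b = 0 := by
          have h1 : (b:ℝ) < 1 := by nlinarith [hψ.1, hψ.2, hψ'.1, hψ'.2]
          have h2 : (-1:ℝ) < (b:ℝ) := by nlinarith [hψ.1, hψ.2, hψ'.1, hψ'.2]
          have h1' : b < 1 := by exact_mod_cast h1
          have h2' : -1 < b := by exact_mod_cast h2
          omega
        subst hb0
        simp only [Int.cast_zero, mul_zero] at hψeq
        constructor <;> linarith
      · -- odd case
        right
        have hmr : ((a:ℝ)+(b:ℝ)) = 2*(m:ℝ)+1 := by exact_mod_cast hm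
        have hπ : π*((a:ℝ)+(b:ℝ)) = π*(2*(m:ℝ)+1) := by rw [hmr]
        refine ⟨⟨m, ?_⟩, ⟨m - b, ?_⟩⟩
        · nlinarith [ha', hb', hπ]
        · push_cast
          nlinarith [ha', hb', hπ]
    · rintro ⟨rfl, ⟨rfl, rfl⟩ | ⟨⟨m, rfl⟩, ⟨n, rfl⟩⟩⟩
      · rfl
      · rw [eulerK_shift, eulerK_shift, neg_mul, neg_mul_neg]
  · intro φ θ ψ
    have h1 : φ + π = φ + π + 2*π*(0:ℤ) := by push_cast; ring
    have h2 : ψ + π = ψ + π + 2*π*(0:ℤ) := by push_cast; ring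
    rw [h1, h2, eulerK_shift, eulerK_shift, neg_mul, neg_mul_neg]
end
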